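/- Every bounded complex-valued cosine sequence (c_n)_{n∈ℤ} takes values in the real interval [−1, 1]. -/

import Mathlib

private lemma aux_norm_le (c : ℤ → ℂ) (hc0 : c 0 = 1)
    (hdouble : ∀ n : ℤ, c (2 * n) = 2 * (c n) ^ 2 - 1)
    (M : ℝ) (hM : ∀ n : ℤ, ‖c n‖ ≤ M)
    (n : ℤ) (w : ℂ) (hw : w ≠ 0) (hx : c n = (w + w⁻¹) / 2) : ‖w‖ ≤ 1 := by
  by_contra h
  push_neg at h
  have hform : ∀ k : ℕ, c (2 ^ k * n) = (w ^ (2 ^ k) + w⁻¹ ^ (2 ^ k)) / 2 := by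
    intro k
    induction k with
    | zero => simpa using hx
    | succ k ih =>
      have h1 : (2 : ℤ) ^ (k + 1) * n = 2 * (2 ^ k * n) := by ring
      rw [h1, hdouble, ih]
      have hW : w ^ (2 ^ k) ≠ 0 := pow_ne_zero _ hw
      have h2 : (2 : ℕ) ^ (k + 1) = 2 ^ k * 2 := by ring
      rw [h2, pow_mul, pow_mul]
      rw [inv_pow]
      field_simp
      ring
  obtain ⟨k, hk⟩ := pow_unbounded_of_one_lt (R := ℝ) (2 * M + 2) h
  have hk2 : ‖w‖ ^ k ≤ ‖w‖ ^ (2 ^ k) :=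
    pow_le_pow_right₀ h.le (Nat.lt_two_pow_self (n := k)).le
  set W : ℂ := w ^ (2 ^ k) with hWdef
  have hWnorm : ‖W‖ = ‖w‖ ^ (2 ^ k) := norm_pow _ _
  have hWinv : ‖W⁻¹‖ ≤ 1 := by
    rw [norm_inv, hWnorm]
    have h1 : (1:ℝ) ≤ ‖w‖ ^ (2 ^ k) := one_le_pow₀ h.le
    exact inv_le_one_of_one_le₀ h1
  have hcW : ‖c (2 ^ k * n)‖ ≤ M := hM _
  have hcW2 : c (2 ^ k * n) = (W + W⁻¹) / 2 := by
    rw [hform k, hWdef, inv_pow]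
  rw [hcW2] at hcW
  have hsum : ‖W + W⁻¹‖ ≤ 2 * M := by
    have : ‖(W + W⁻¹) / 2‖ = ‖W + W⁻¹‖ / 2 := by
      rw [norm_div]; norm_num
    rw [this] at hcW
    linarith
  have hlow : ‖W‖ - ‖W⁻¹‖ ≤ ‖W + W⁻¹‖ := by
    have := norm_sub_norm_le W (-W⁻¹)
    simpa [sub_neg_eq_add] using this
  have : ‖W‖ ≤ 2 * M + 1 := by linarith
  have : (2 : ℝ) * M + 2 < 2 * M + 1 := by
    calc 2 * M + 2 < ‖w‖ ^ k := hk
    _ ≤ ‖w‖ ^ (2 ^ k) := hk2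
    _ = ‖W‖ := hWnorm.symm
    _ ≤ 2 * M + 1 := this
  linarith

theorem stmt_4 (c : ℤ → ℂ) (hc0 : c 0 = 1)
    (hc : ∀ m n : ℤ, c (m + n) + c (m - n) = 2 * c m * c n)
    (hb : ∃ M : ℝ, ∀ n : ℤ, ‖c n‖ ≤ M) :
    ∀ n : ℤ, (c n).im = 0 ∧ (c n).re ∈ Set.Icc (-1 : ℝ) 1 := by
  obtain ⟨M, hM⟩ := hb
  have hdouble : ∀ n : ℤ, c (2 * n) = 2 * (c n) ^ 2 - 1 := by
    intro n
    have := hc n n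
    rw [sub_self, hc0] at this
    have h2 : n + n = 2 * n := by ring
    rw [h2] at this
    linear_combination this
  intro n
  set x := c n with hxdef
  obtain ⟨s, hs⟩ : ∃ s : ℂ, s ^ 2 = x ^ 2 - 1 :=
    IsAlgClosed.exists_pow_nat_eq _ (by norm_num)
  set w : ℂ := x + s with hwdef
  have hprod : w * (x - s) = 1 := by
    have : w * (x - s) = x ^ 2 - s ^ 2 := by ring
    rw [this, hs]; ring
  have hw : w ≠ 0 := by
    intro h0; rw [h0, zero_mul] at hprod; exact one_ne_zero hprod.symm
  have hwinv : w⁻¹ = x - s := (eq_inv_of_mul_eq_one_right hprod).symm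
  have hxw : x = (w + w⁻¹) / 2 := by
    rw [hwinv, hwdef]; ring
  have h1 : ‖w‖ ≤ 1 := aux_norm_le c hc0 hdouble M hM n w hw hxw
  have hwinv_ne : w⁻¹ ≠ 0 := inv_ne_zero hw
  have hxw' : x = (w⁻¹ + (w⁻¹)⁻¹) / 2 := by
    rw [inv_inv, add_comm]; exact hxw
  have h2 : ‖w⁻¹‖ ≤ 1 := aux_norm_le c hc0 hdouble M hM n w⁻¹ hwinv_ne hxw'
  have hnorm1 : ‖w‖ = 1 := by
    rw [norm_inv, inv_le_one_iff₀] at h2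
    rcases h2 with h2 | h2
    · exact absurd h2 (by simp [hw])
    · linarith
  have hconj : w⁻¹ = starRingEnd ℂ w := by
    have hns : Complex.normSq w = 1 := by
      rw [Complex.normSq_eq_norm_sq, hnorm1]
      norm_num
    have : w * starRingEnd ℂ w = 1 := by
      rw [Complex.mul_conj, hns]; norm_num
    exact (eq_inv_of_mul_eq_one_right this).symm
  have hxre : x = (w.re : ℂ) := by
    rw [hxw, hconj]
    rw [Complex.add_conj]
    push_cast
    ring
  constructor
  · rw [hxre]; simp
  · rw [hxre]
    simp only [Complex.ofReal_re]
    have : |w.re| ≤ ‖w‖ := Complex.abs_re_le_norm w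
    rw [hnorm1] at this
    constructor <;> [linarith [abs_le.mp this] ; linarith [(abs_le.mp this).2]]
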